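/- If (α₁, α₂, α₃¹, …, α₃ʳ, α₄, α₅) is an admissible tuple in which the entries α₃¹, …, α₃ʳ are all ≤ −1, then F(α) does not belong to Diff₁ ∪ Diff₂ ∪ Diff₃. -/

import Mathlib

/-- `Diff₁ = {(s, s, b·s + q) : -r ≤ s ≤ r, r-n ≤ q ≤ n-r}`, in coordinates recording the
coefficients of `D_t, D_y, D_v` in the Picard group. -/
def Diff1 (n r b : ℤ) : Set (ℤ × ℤ × ℤ) :=
  {p | ∃ s q : ℤ, -r ≤ s ∧ s ≤ r ∧ r - n ≤ q ∧ q ≤ n - r ∧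
    p = (s, s, b * s + q)}

/-- `Diff₂ = {(s, s-1, b·s + q) : 1-r ≤ s ≤ r, r-n+1 ≤ q ≤ n-r}`. -/
def Diff2 (n r b : ℤ) : Set (ℤ × ℤ × ℤ) :=
  {p | ∃ s q : ℤ, 1 - r ≤ s ∧ s ≤ r ∧ r - n + 1 ≤ q ∧ q ≤ n - r ∧
    p = (s, s - 1, b * s + q)}

/-- `Diff₃ = {(s, s+1, b·s + q) : -r ≤ s ≤ r-1, r-n ≤ q ≤ n-r-1}`. -/
def Diff3 (n r b : ℤ) : Set (ℤ × ℤ × ℤ) :=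
  {p | ∃ s q : ℤ, -r ≤ s ∧ s ≤ r - 1 ∧ r - n ≤ q ∧ q ≤ n - r - 1 ∧
    p = (s, s + 1, b * s + q)}

/-- The predicate `P` on `ℤ/5` holds exactly on a cyclically consecutive block of length `m`
(starting at some index `i`). -/
def IsCyclicBlock (P : Fin 5 → Prop) (m : ℕ) : Prop :=
  ∃ i : Fin 5, ∀ k : Fin 5, P k ↔ ∃ d : ℕ, d < m ∧ k = i + Fin.ofNat 5 d

/-- A tuple `(α₁, α₂, α₃¹, …, α₃ʳ, α₄, α₅)` (with `α₃ʲ = a3 j` for `1 ≤ j ≤ r`) is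
*admissible* if: the entries `α₃¹, …, α₃ʳ` are all `≤ -1` or all `≥ 0`; the set of negative
groups (group `3` being negative when all `α₃ʲ < 0`) is a cyclically consecutive block in
`(1,2,3,4,5)` of size exactly `2`, `3` or `5`; and if `α₁ < 0` then `α₁ ≤ -(n-r)`. -/
def Admissible (n r : ℤ) (α₁ α₂ α₄ α₅ : ℤ) (a3 : ℤ → ℤ) : Prop :=
  ((∀ j ∈ Finset.Icc 1 r, a3 j ≤ -1) ∨ (∀ j ∈ Finset.Icc 1 r, 0 ≤ a3 j)) ∧
  (∃ m ∈ ({2, 3, 5} : Set ℕ),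
    IsCyclicBlock ![α₁ < 0, α₂ < 0, ∀ j ∈ Finset.Icc 1 r, a3 j < 0, α₄ < 0, α₅ < 0] m) ∧
  (α₁ < 0 → α₁ ≤ -(n - r))

/-- `F(α) = (α₄ + Σ_{j=1}^r α₃ʲ, α₂ - α₅ + Σ_{j=1}^r α₃ʲ,
α₁ + b·α₃¹ + Σ_{j=2}^r (b - c_j)·α₃ʲ + α₅)`. -/
noncomputable def Fmap (r b : ℤ) (c : ℤ → ℤ) (α₁ α₂ α₄ α₅ : ℤ) (a3 : ℤ → ℤ) : ℤ × ℤ × ℤ :=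
  (α₄ + ∑ j ∈ Finset.Icc 1 r, a3 j,
   α₂ - α₅ + ∑ j ∈ Finset.Icc 1 r, a3 j,
   α₁ + b * a3 1 + (∑ j ∈ Finset.Icc 2 r, (b - c j) * a3 j) + α₅)


private lemma blockAux (m : ℕ) (hm : m = 2 ∨ m = 3 ∨ m = 5) (i : Fin 5)
    (h2 : ∃ d : ℕ, d < m ∧ (2:Fin 5) = i + Fin.ofNat 5 d)
    (h3 : ¬ ∃ d : ℕ, d < m ∧ (3:Fin 5) = i + Fin.ofNat 5 d) :
    (∃ d : ℕ, d < m ∧ (1:Fin 5) = i + Fin.ofNat 5 d) ∧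
      ¬ ∃ d : ℕ, d < m ∧ (4:Fin 5) = i + Fin.ofNat 5 d := by
  rcases hm with rfl | rfl | rfl <;> revert h2 h3 <;> revert i <;> decide

/-- If `(α₁, α₂, α₃¹, …, α₃ʳ, α₄, α₅)` is an admissible tuple in which the
entries `α₃¹, …, α₃ʳ` are all `≤ -1`, then `F(α) ∉ Diff₁ ∪ Diff₂ ∪ Diff₃`. -/
theorem fmap_not_in_diff_of_a3_neg (n r b : ℤ) (hr : 1 ≤ r) (hrn : r ≤ n - 1) (hb : 0 ≤ b)
    (c : ℤ → ℤ) (hc : ∀ j ∈ Finset.Icc (2 : ℤ) r, 0 ≤ c j)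
    (α₁ α₂ α₄ α₅ : ℤ) (a3 : ℤ → ℤ)
    (hadm : Admissible n r α₁ α₂ α₄ α₅ a3)
    (hneg : ∀ j ∈ Finset.Icc (1 : ℤ) r, a3 j ≤ -1) :
    Fmap r b c α₁ α₂ α₄ α₅ a3 ∉ Diff1 n r b ∪ Diff2 n r b ∪ Diff3 n r b := by

  -- The key facts about the sum of the `a3 j`.
  have hcard : (Finset.Icc (1:ℤ) r).card = r.toNat := by
    rw [Int.card_Icc]; congr 1; omega
  have hS : ∑ j ∈ Finset.Icc (1:ℤ) r, a3 j ≤ -r := by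
    calc ∑ j ∈ Finset.Icc (1:ℤ) r, a3 j ≤ ∑ _j ∈ Finset.Icc (1:ℤ) r, (-1:ℤ) :=
          Finset.sum_le_sum hneg
      _ = -r := by
          rw [Finset.sum_const, hcard]
          simp [Int.toNat_of_nonneg (by omega : (0:ℤ) ≤ r)]
  set S := ∑ j ∈ Finset.Icc (1:ℤ) r, a3 j with hSdef
  obtain ⟨-, ⟨m, hm, i, hi⟩, -⟩ := hadm
  simp only [Set.mem_insert_iff, Set.mem_singleton_iff] at hm
  have hP2 : (∃ d : ℕ, d < m ∧ (2:Fin 5) = i + Fin.ofNat 5 d) := by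
    have h2 := hi 2
    have e2 : (![α₁ < 0, α₂ < 0, ∀ j ∈ Finset.Icc 1 r, a3 j < 0, α₄ < 0, α₅ < 0]
        : Fin 5 → Prop) 2 = (∀ j ∈ Finset.Icc 1 r, a3 j < 0) := rfl
    rw [e2] at h2
    exact h2.mp (fun j hj => lt_of_le_of_lt (hneg j hj) (by norm_num))
  have e1 : (![α₁ < 0, α₂ < 0, ∀ j ∈ Finset.Icc 1 r, a3 j < 0, α₄ < 0, α₅ < 0]
      : Fin 5 → Prop) 1 = (α₂ < 0) := rfl
  have e3 : (![α₁ < 0, α₂ < 0, ∀ j ∈ Finset.Icc 1 r, a3 j < 0, α₄ < 0, α₅ < 0]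
      : Fin 5 → Prop) 3 = (α₄ < 0) := rfl
  have e4 : (![α₁ < 0, α₂ < 0, ∀ j ∈ Finset.Icc 1 r, a3 j < 0, α₄ < 0, α₅ < 0]
      : Fin 5 → Prop) 4 = (α₅ < 0) := rfl
  have hcase : α₄ < 0 ∨ (α₂ < 0 ∧ 0 ≤ α₄ ∧ 0 ≤ α₅) := by
    by_cases h4 : α₄ < 0
    · exact Or.inl h4
    · right
      have hP3 : ¬ (∃ d : ℕ, d < m ∧ (3:Fin 5) = i + Fin.ofNat 5 d) := by
        intro h
        exact h4 (e3 ▸ (hi 3).mpr h)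
      have key := blockAux m hm i hP2 hP3
      refine ⟨e1 ▸ (hi 1).mpr key.1, not_lt.mp h4, not_lt.mp ?_⟩
      intro h5
      exact key.2 ((hi 4).mp (e4 ▸ h5))
  -- Now rule out membership in each `Diff`.
  rintro ((⟨s, q, hs1, hs2, hq1, hq2, hp⟩ | ⟨s, q, hs1, hs2, hq1, hq2, hp⟩) |
    ⟨s, q, hs1, hs2, hq1, hq2, hp⟩) <;>
  · rw [Fmap, Prod.mk.injEq, Prod.mk.injEq] at hp
    obtain ⟨h1, h2, -⟩ := hp
    rw [← hSdef] at h1 h2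
    rcases hcase with h | ⟨hα₂, hα₄, hα₅⟩ <;> omega
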